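/- For every α > 0, the function μ ↦ ∫_{-∞}^{∞} (η(μ+z, α) - μ)^2 φ(z) dz is differentiable on ℝ, with derivative at μ equal to 2μ[Φ(α-μ) - Φ(-α-μ)]. -/

import Mathlib

open MeasureTheory Filter

/-- Standard normal probability density function. -/
noncomputable def stdNormalPDF (x : ℝ) : ℝ :=
  (Real.sqrt (2 * Real.pi))⁻¹ * Real.exp (-(x ^ 2) / 2)

/-- Standard normal cumulative distribution function. -/
noncomputable def stdNormalCDF (x : ℝ) : ℝ :=
  ∫ t in Set.Iic x, stdNormalPDF t

/-- Soft-thresholding function `η(x, λ) = sign(x) · max(|x| − λ, 0)`. -/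
noncomputable def softThreshold (x lam : ℝ) : ℝ :=
  Real.sign x * max (|x| - lam) 0

lemma cont_pdf : Continuous stdNormalPDF := by
  unfold stdNormalPDF; fun_prop

lemma pdf_nonneg (x : ℝ) : 0 ≤ stdNormalPDF x := by
  unfold stdNormalPDF
  positivity

lemma integrable_pdf : Integrable stdNormalPDF := by
  have h := (integrable_exp_neg_mul_sq (by norm_num : (0:ℝ) < 1/2)).const_mul
    (Real.sqrt (2 * Real.pi))⁻¹
  refine h.congr (Eventually.of_forall fun x => ?_)
  unfold stdNormalPDF
  ring_nf

lemma sq_exp_bound (z : ℝ) : z ^ 2 * Real.exp (-(1/4) * z ^ 2) ≤ 4 := by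
  have h1 : (1/4) * z ^ 2 ≤ Real.exp ((1/4) * z ^ 2) := by
    have := Real.add_one_le_exp ((1/4) * z ^ 2)
    linarith
  have h2 : Real.exp (-(1/4) * z ^ 2) = (Real.exp ((1/4) * z ^ 2))⁻¹ := by
    rw [← Real.exp_neg]; ring_nf
  rw [h2, inv_eq_one_div, mul_one_div, div_le_iff₀ (Real.exp_pos _)]
  linarith

lemma measurable_realSign : Measurable Real.sign := by
  unfold Real.sign
  exact Measurable.ite (measurableSet_lt measurable_id measurable_const) measurable_const
    (Measurable.ite (measurableSet_lt measurable_const measurable_id) measurable_const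
      measurable_const)

lemma hasDerivAt_Iic_integral {g : ℝ → ℝ} (hg : Integrable g) (hc : Continuous g) (a : ℝ) :
    HasDerivAt (fun b => ∫ z in Set.Iic b, g z) (g a) a := by
  have heq : ∀ b : ℝ, ∫ z in Set.Iic b, g z = (∫ z in Set.Iic 0, g z) + ∫ z in (0:ℝ)..b, g z := by
    intro b
    have := intervalIntegral.integral_Iic_sub_Iic (hg.integrableOn (s := Set.Iic 0))
      (hg.integrableOn (s := Set.Iic b))
    linarith
  have hd : HasDerivAt (fun b => (∫ z in Set.Iic 0, g z) + ∫ z in (0:ℝ)..b, g z) (g a) a :=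
    (intervalIntegral.integral_hasDerivAt_right hg.intervalIntegrable
      (hc.stronglyMeasurableAtFilter _ _) hc.continuousAt).const_add _
  have hfe : (fun b => ∫ z in Set.Iic b, g z) = fun b => (∫ z in Set.Iic 0, g z) + ∫ z in (0:ℝ)..b, g z := funext heq
  rw [hfe]; exact hd

lemma pdf_le (z : ℝ) : stdNormalPDF z ≤ (Real.sqrt (2 * Real.pi))⁻¹ *
    (Real.exp (-(1/4) * z ^ 2) * Real.exp (-(1/4) * z ^ 2)) := by
  unfold stdNormalPDF
  rw [← Real.exp_add]
  have : -(1/4) * z ^ 2 + -(1/4) * z ^ 2 = -(z ^ 2) / 2 := by ring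
  rw [this]

lemma quad_mul_pdf_integrable (c : ℝ) :
    Integrable (fun z : ℝ => (z ^ 2 + c) * stdNormalPDF z) := by
  have hs : (0:ℝ) < Real.sqrt (2 * Real.pi) := Real.sqrt_pos.2 (by positivity)
  refine Integrable.mono'
    (((integrable_exp_neg_mul_sq (by norm_num : (0:ℝ) < 1/4)).const_mul
      ((4 + |c|) * (Real.sqrt (2 * Real.pi))⁻¹))) ?_ (Eventually.of_forall fun z => ?_)
  · exact ((measurable_id.pow_const 2).add_const c).mul
      (cont_pdf.measurable) |>.aestronglyMeasurable
  · have hb := sq_exp_bound z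
    have hE : Real.exp (-(1/4) * z ^ 2) ≤ 1 := by
      rw [Real.exp_le_one_iff]; nlinarith [sq_nonneg z]
    have hE0 : (0:ℝ) < Real.exp (-(1/4) * z ^ 2) := Real.exp_pos _
    have h1 : |(z ^ 2 + c) * stdNormalPDF z| ≤ (z ^ 2 + |c|) * stdNormalPDF z := by
      rw [abs_mul, abs_of_nonneg (pdf_nonneg z)]
      have : |z ^ 2 + c| ≤ z ^ 2 + |c| := by
        calc |z ^ 2 + c| ≤ |z ^ 2| + |c| := abs_add_le _ _
        _ = z ^ 2 + |c| := by rw [abs_of_nonneg (sq_nonneg z)]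
      exact mul_le_mul_of_nonneg_right this (pdf_nonneg z)
    refine h1.trans ?_
    have h2 : (z ^ 2 + |c|) * stdNormalPDF z ≤ (z ^ 2 + |c|) *
        ((Real.sqrt (2 * Real.pi))⁻¹ * (Real.exp (-(1/4) * z ^ 2) * Real.exp (-(1/4) * z ^ 2))) :=
      mul_le_mul_of_nonneg_left (pdf_le z) (by positivity)
    refine h2.trans ?_
    have h3 : (z ^ 2 + |c|) * Real.exp (-(1/4) * z ^ 2) ≤ 4 + |c| := by
      nlinarith [abs_nonneg c]
    have h4 : (z ^ 2 + |c|) *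
        ((Real.sqrt (2 * Real.pi))⁻¹ * (Real.exp (-(1/4) * z ^ 2) * Real.exp (-(1/4) * z ^ 2)))
        = ((z ^ 2 + |c|) * Real.exp (-(1/4) * z ^ 2)) * (Real.sqrt (2 * Real.pi))⁻¹ *
          Real.exp (-(1/4) * z ^ 2) := by ring
    rw [h4]
    have := mul_le_mul_of_nonneg_right
      (mul_le_mul_of_nonneg_right h3 (by positivity : (0:ℝ) ≤ (Real.sqrt (2 * Real.pi))⁻¹)) hE0.le
    linarith

lemma sq_mul_pdf_integrable (c : ℝ) :
    Integrable (fun z : ℝ => (z + c) ^ 2 * stdNormalPDF z) := by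
  refine Integrable.mono' ((quad_mul_pdf_integrable (c ^ 2)).const_mul 2) ?_
    (Eventually.of_forall fun z => ?_)
  · exact ((measurable_id.add_const c).pow_const 2).mul
      cont_pdf.measurable |>.aestronglyMeasurable
  · have h0 : (0:ℝ) ≤ (z + c) ^ 2 * stdNormalPDF z :=
      mul_nonneg (sq_nonneg _) (pdf_nonneg z)
    rw [Real.norm_eq_abs, abs_of_nonneg h0]
    have : (z + c) ^ 2 ≤ 2 * (z ^ 2 + c ^ 2) := by nlinarith [sq_nonneg (z - c)]
    calc (z + c) ^ 2 * stdNormalPDF z ≤ 2 * (z ^ 2 + c ^ 2) * stdNormalPDF z :=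
          mul_le_mul_of_nonneg_right this (pdf_nonneg z)
    _ = 2 * ((z ^ 2 + c ^ 2) * stdNormalPDF z) := by ring

lemma abs_softThreshold_le (x lam : ℝ) (h : 0 ≤ lam) : |softThreshold x lam| ≤ |x| := by
  unfold softThreshold
  rw [abs_mul]
  have h1 : |Real.sign x| ≤ 1 := by
    rcases Real.sign_apply_eq x with h | h | h <;> rw [h] <;> norm_num
  have h2 : |max (|x| - lam) 0| ≤ |x| := by
    rw [abs_of_nonneg (le_max_right _ _)]
    rcases max_cases (|x| - lam) 0 with ⟨he, _⟩ | ⟨he, _⟩ <;> rw [he]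
    · linarith [abs_nonneg x]
    · exact abs_nonneg x
  calc |Real.sign x| * |max (|x| - lam) 0| ≤ 1 * |x| :=
        mul_le_mul h1 h2 (abs_nonneg _) zero_le_one
  _ = |x| := one_mul _

lemma measurable_softThreshold (lam : ℝ) : Measurable (fun x => softThreshold x lam) := by
  unfold softThreshold
  exact measurable_realSign.mul ((measurable_abs.sub_const lam).max measurable_const)

lemma integrand_integrable (α m : ℝ) (hα : 0 ≤ α) :
    Integrable (fun z : ℝ => (softThreshold (m + z) α - m) ^ 2 * stdNormalPDF z) := by
  refine Integrable.mono' ((quad_mul_pdf_integrable (4 * m ^ 2)).const_mul 2) ?_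
    (Eventually.of_forall fun z => ?_)
  · exact (((measurable_softThreshold α).comp (measurable_const.add measurable_id)).sub_const
      m |>.pow_const 2).mul cont_pdf.measurable |>.aestronglyMeasurable
  · have h0 : (0:ℝ) ≤ (softThreshold (m + z) α - m) ^ 2 * stdNormalPDF z :=
      mul_nonneg (sq_nonneg _) (pdf_nonneg z)
    rw [Real.norm_eq_abs, abs_of_nonneg h0]
    have h1 : |softThreshold (m + z) α - m| ≤ |z| + 2 * |m| := by
      have h2 := abs_softThreshold_le (m + z) α hα
      have h3 : |m + z| ≤ |m| + |z| := abs_add_le _ _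
      have h4 : |softThreshold (m + z) α - m| ≤ |softThreshold (m + z) α| + |m| :=
        abs_sub _ _
      linarith
    have h5 : (softThreshold (m + z) α - m) ^ 2 ≤ (|z| + 2 * |m|) ^ 2 := by
      rw [← sq_abs (softThreshold (m + z) α - m)]
      exact pow_le_pow_left₀ (abs_nonneg _) h1 2
    have h6 : (|z| + 2 * |m|) ^ 2 ≤ 2 * (z ^ 2 + 4 * m ^ 2) := by
      nlinarith [sq_nonneg (|z| - 2 * |m|), sq_abs z, sq_abs m]
    calc (softThreshold (m + z) α - m) ^ 2 * stdNormalPDF z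
        ≤ (2 * (z ^ 2 + 4 * m ^ 2)) * stdNormalPDF z :=
          mul_le_mul_of_nonneg_right (h5.trans h6) (pdf_nonneg z)
    _ = 2 * ((z ^ 2 + 4 * m ^ 2) * stdNormalPDF z) := by ring

lemma cont_sq_mul_pdf (c : ℝ) : Continuous (fun z : ℝ => (z + c) ^ 2 * stdNormalPDF z) :=
  (((continuous_id.add continuous_const).pow 2).mul cont_pdf)

lemma decomposition (α : ℝ) (hα : 0 < α) (m : ℝ) :
    ∫ z : ℝ, (softThreshold (m + z) α - m) ^ 2 * stdNormalPDF z
    = (∫ z : ℝ, (z + -α) ^ 2 * stdNormalPDF z)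
      - (∫ z in Set.Iic (α - m), (z + -α) ^ 2 * stdNormalPDF z)
      + (∫ z in Set.Iic (-α - m), (z + α) ^ 2 * stdNormalPDF z)
      + m ^ 2 * (stdNormalCDF (α - m) - stdNormalCDF (-α - m)) := by
  have hab : -α - m ≤ α - m := by linarith
  set h : ℝ → ℝ := fun z => (softThreshold (m + z) α - m) ^ 2 * stdNormalPDF z with hh
  have e1 : Set.EqOn h (fun z => (z + -α) ^ 2 * stdNormalPDF z) (Set.Ioi (α - m)) := by
    intro z hz
    have hz' : α - m < z := hz
    have hpos : 0 < m + z := by linarith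
    simp only [hh, softThreshold]
    rw [Real.sign_of_pos hpos, abs_of_pos hpos,
      max_eq_left (by linarith : (0:ℝ) ≤ m + z - α)]
    ring
  have e2 : Set.EqOn h (fun z => m ^ 2 * stdNormalPDF z)
      (Set.Ioc (-α - m) (α - m)) := by
    intro z hz
    obtain ⟨hz1, hz2⟩ := hz
    have habs : |m + z| - α ≤ 0 := by
      rw [sub_nonpos, abs_le]; constructor <;> linarith
    simp only [hh, softThreshold]
    rw [max_eq_right habs, mul_zero]
    ring
  have e3 : Set.EqOn h (fun z => (z + α) ^ 2 * stdNormalPDF z) (Set.Iic (-α - m)) := by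
    intro z hz
    have hz' : z ≤ -α - m := hz
    have hneg : m + z < 0 := by linarith
    simp only [hh, softThreshold]
    rw [Real.sign_of_neg hneg, abs_of_neg hneg,
      max_eq_left (by linarith : (0:ℝ) ≤ -(m + z) - α)]
    ring
  have hInt : Integrable h := integrand_integrable α m hα.le
  have hg1 := sq_mul_pdf_integrable (-α)
  have hg2 := sq_mul_pdf_integrable α
  have hmp : Integrable (fun z : ℝ => m ^ 2 * stdNormalPDF z) := integrable_pdf.const_mul _
  have split1 : (∫ z : ℝ, h z)
      = (∫ z in Set.Iic (α - m), h z) + ∫ z in Set.Ioi (α - m), h z :=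
    (intervalIntegral.integral_Iic_add_Ioi hInt.integrableOn hInt.integrableOn).symm
  have split2 : (∫ z in Set.Iic (α - m), h z)
      = (∫ z in Set.Iic (-α - m), h z) + ∫ z in Set.Ioc (-α - m) (α - m), h z := by
    rw [← setIntegral_union (Set.Iic_disjoint_Ioc le_rfl) measurableSet_Ioc
      hInt.integrableOn hInt.integrableOn, Set.Iic_union_Ioc_eq_Iic hab]
  have c1 : (∫ z in Set.Ioi (α - m), h z)
      = ∫ z in Set.Ioi (α - m), (z + -α) ^ 2 * stdNormalPDF z :=
    setIntegral_congr_fun measurableSet_Ioi e1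
  have c2 : (∫ z in Set.Ioc (-α - m) (α - m), h z)
      = ∫ z in Set.Ioc (-α - m) (α - m), m ^ 2 * stdNormalPDF z :=
    setIntegral_congr_fun measurableSet_Ioc e2
  have c3 : (∫ z in Set.Iic (-α - m), h z)
      = ∫ z in Set.Iic (-α - m), (z + α) ^ 2 * stdNormalPDF z :=
    setIntegral_congr_fun measurableSet_Iic e3
  have tail1 : (∫ z in Set.Ioi (α - m), (z + -α) ^ 2 * stdNormalPDF z)
      = (∫ z : ℝ, (z + -α) ^ 2 * stdNormalPDF z)
        - ∫ z in Set.Iic (α - m), (z + -α) ^ 2 * stdNormalPDF z := by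
    have := intervalIntegral.integral_Iic_add_Ioi (b := α - m) hg1.integrableOn hg1.integrableOn
    linarith
  have mid : (∫ z in Set.Ioc (-α - m) (α - m), m ^ 2 * stdNormalPDF z)
      = m ^ 2 * ∫ z in Set.Ioc (-α - m) (α - m), stdNormalPDF z :=
    integral_const_mul _ _
  have midsplit : (∫ z in Set.Ioc (-α - m) (α - m), stdNormalPDF z)
      = stdNormalCDF (α - m) - stdNormalCDF (-α - m) := by
    have := setIntegral_union (f := stdNormalPDF) (μ := volume)
      (s := Set.Iic (-α - m)) (t := Set.Ioc (-α - m) (α - m))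
      (Set.Iic_disjoint_Ioc le_rfl) measurableSet_Ioc
      integrable_pdf.integrableOn integrable_pdf.integrableOn
    rw [Set.Iic_union_Ioc_eq_Iic hab] at this
    simp only [stdNormalCDF]
    linarith
  rw [split1, split2, c1, c2, c3, tail1, mid, midsplit]
  ring

theorem risk_deriv_in_mu (α : ℝ) (hα : 0 < α) (μ : ℝ) :
    HasDerivAt
      (fun μ : ℝ => ∫ z : ℝ, (softThreshold (μ + z) α - μ) ^ 2 * stdNormalPDF z)
      (2 * μ * (stdNormalCDF (α - μ) - stdNormalCDF (-α - μ))) μ := by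
  have key : (fun m : ℝ => ∫ z : ℝ, (softThreshold (m + z) α - m) ^ 2 * stdNormalPDF z)
      = fun m : ℝ => (∫ z : ℝ, (z + -α) ^ 2 * stdNormalPDF z)
        - (∫ z in Set.Iic (α - m), (z + -α) ^ 2 * stdNormalPDF z)
        + (∫ z in Set.Iic (-α - m), (z + α) ^ 2 * stdNormalPDF z)
        + m ^ 2 * (stdNormalCDF (α - m) - stdNormalCDF (-α - m)) :=
    funext (decomposition α hα)
  rw [key]
  have hinner1 : HasDerivAt (fun m : ℝ => α - m) (-1) μ := by
    simpa using (hasDerivAt_id μ).const_sub α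
  have hinner2 : HasDerivAt (fun m : ℝ => -α - m) (-1) μ := by
    simpa using (hasDerivAt_id μ).const_sub (-α)
  have d1 : HasDerivAt (fun m : ℝ => ∫ z in Set.Iic (α - m), (z + -α) ^ 2 * stdNormalPDF z)
      ((((α - μ) + -α) ^ 2 * stdNormalPDF (α - μ)) * (-1)) μ :=
    (hasDerivAt_Iic_integral (sq_mul_pdf_integrable (-α)) (cont_sq_mul_pdf (-α))
      (α - μ)).comp μ hinner1
  have d2 : HasDerivAt (fun m : ℝ => ∫ z in Set.Iic (-α - m), (z + α) ^ 2 * stdNormalPDF z)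
      ((((-α - μ) + α) ^ 2 * stdNormalPDF (-α - μ)) * (-1)) μ :=
    (hasDerivAt_Iic_integral (sq_mul_pdf_integrable α) (cont_sq_mul_pdf α)
      (-α - μ)).comp μ hinner2
  have dCDF : ∀ x : ℝ, HasDerivAt stdNormalCDF (stdNormalPDF x) x := by
    intro x
    exact hasDerivAt_Iic_integral integrable_pdf cont_pdf x
  have dΦ1 : HasDerivAt (fun m : ℝ => stdNormalCDF (α - m)) (stdNormalPDF (α - μ) * (-1)) μ :=
    (dCDF (α - μ)).comp μ hinner1
  have dΦ2 : HasDerivAt (fun m : ℝ => stdNormalCDF (-α - m)) (stdNormalPDF (-α - μ) * (-1)) μ :=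
    (dCDF (-α - μ)).comp μ hinner2
  have dm : HasDerivAt (fun m : ℝ => m ^ 2) (2 * μ) μ := by
    simpa using hasDerivAt_pow 2 μ
  have total := (((hasDerivAt_const μ (∫ z : ℝ, (z + -α) ^ 2 * stdNormalPDF z)).sub d1).add
    d2).add (dm.mul (dΦ1.sub dΦ2))
  refine total.congr_deriv ?_
  simp only [Pi.sub_apply]
  ring
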